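/- Let L be a labeling of an n-element poset P, and write L_γ = ∂^γ(L). For every integer γ with 0 ≤ γ ≤ n, each of the elements L_γ⁻¹(n−γ+1), L_γ⁻¹(n−γ+2), …, L_γ⁻¹(n) is frozen with respect to L_γ. -/

import Mathlib

open scoped Classical

noncomputable section

abbrev Labeling (P : Type*) [Fintype P] : Type _ := P ≃ Fin (Fintype.card P)

variable {P : Type*} [Fintype P] [PartialOrder P]

def IsLinearExt (L : Labeling P) : Prop := ∀ x y : P, x ≤ y → L x ≤ L y

def lSucc (L : Labeling P) (v : P)
    (h : (Finset.univ.filter fun y => v < y).Nonempty) : P :=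
  L.symm (((Finset.univ.filter fun y => v < y).image L).min' (h.image _))

lemma lt_lSucc (L : Labeling P) (v : P)
    (h : (Finset.univ.filter fun y => v < y).Nonempty) : v < lSucc L v h := by
  have hmem := Finset.min'_mem ((Finset.univ.filter fun y => v < y).image L) (h.image _)
  obtain ⟨y, hy, hLy⟩ := Finset.mem_image.mp hmem
  have heq : lSucc L v h = y := by
    unfold lSucc
    rw [← hLy, Equiv.symm_apply_apply]
  rw [heq]
  exact (Finset.mem_filter.mp hy).2

def promChainFrom (L : Labeling P) (v : P) : List P :=
  if h : (Finset.univ.filter fun y => v < y).Nonempty then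
    v :: promChainFrom L (lSucc L v h)
  else [v]
termination_by (Finset.univ.filter fun y => v < y).card
decreasing_by
  apply Finset.card_lt_card
  refine (Finset.ssubset_iff_of_subset ?_).mpr ?_
  · intro z hz
    simp only [Finset.mem_filter, Finset.mem_univ, true_and] at *
    exact lt_trans (lt_lSucc L v h) hz
  · exact ⟨lSucc L v h, by simp [lt_lSucc L v h], by simp⟩

def promote (L : Labeling P) : Labeling P :=
  if h : Nonempty P then
    ((List.formPerm (promChainFrom L (L.symm ⟨0, @Fintype.card_pos P _ h⟩))).trans L).trans
      (finRotate (Fintype.card P)).symm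
  else L

/-- The label of `x` under `L`, as an integer in `{1, …, n}`. -/
def labelOf (L : Labeling P) (x : P) : ℕ := (L x : ℕ) + 1

/-- The largest `a ∈ {0, …, n}` such that for all `j ∈ {n−a+1, …, n}`, the set
`{x ∈ P : j ≤ L(x) ≤ n}` is an upper order ideal of `P`. -/
def frozenA (L : Labeling P) : ℕ :=
  sSup {a : ℕ | a ≤ Fintype.card P ∧
    ∀ j, Fintype.card P - a + 1 ≤ j → j ≤ Fintype.card P →
      IsUpperSet {x : P | j ≤ labelOf L x ∧ labelOf L x ≤ Fintype.card P}}

/-- `x` is frozen with respect to `L` if `n − a + 1 ≤ L(x) ≤ n`, where `a` is as in `frozenA`. -/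
def IsFrozen (L : Labeling P) (x : P) : Prop :=
  Fintype.card P - frozenA L + 1 ≤ labelOf L x

/-- A labeling of an `n`-element poset is tangled if `n ≥ 2` and `∂^{n−2}(L)` is
not a linear extension. -/
def IsTangled (L : Labeling P) : Prop :=
  2 ≤ Fintype.card P ∧ ¬ IsLinearExt (promote^[Fintype.card P - 2] L)

/-- A labeling of an `n`-element poset is `k`-untangled if `n ≥ k + 2` and
`∂^{n−k−2}(L)` is not a linear extension. -/
def IsUntangled (k : ℕ) (L : Labeling P) : Prop :=
  k + 2 ≤ Fintype.card P ∧ ¬ IsLinearExt (promote^[Fintype.card P - k - 2] L)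

/-- The comparability graph of a poset. -/
def compGraph (P : Type*) [PartialOrder P] : SimpleGraph P where
  Adj x y := x ≠ y ∧ (x ≤ y ∨ y ≤ x)
  symm := by
    constructor
    intro x y hxy
    exact ⟨hxy.1.symm, hxy.2.symm⟩
  loopless := by
    constructor
    intro x hx
    exact hx.1 rfl

/-- The standardization of an injective map from a finite type into a linear order:
the unique relabeling by `{1, …, n}` with the same relative order of values. -/
def standardize {R β : Type*} [Fintype R] [LinearOrder β]
    (f : R → β) (hf : Function.Injective f) : R ≃ Fin (Fintype.card R) :=
  have hcard : (Finset.univ.image f).card = Fintype.card R := by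
    rw [Finset.card_image_of_injective _ hf, Finset.card_univ]
  (Equiv.ofBijective (fun x => (⟨f x, by simp⟩ : ↥(Finset.univ.image f)))
    (by
      rw [Fintype.bijective_iff_injective_and_card]
      refine ⟨fun a b hab => hf (congrArg Subtype.val hab), ?_⟩
      rw [Fintype.card_coe, hcard])).trans
    ((Finset.univ.image f).orderIsoOfFin hcard).symm.toEquiv

/-- The toggle operator `τ_{k+1}`: it swaps the labels `k+1` and `k+2` (i.e. the
`Fin`-labels `k` and `k+1`) unless `L⁻¹(k+1) <_P L⁻¹(k+2)`. -/
def toggle (L : Labeling P) (k : ℕ) : Labeling P :=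
  if h : k + 1 < Fintype.card P then
    if L.symm ⟨k, Nat.lt_of_succ_lt h⟩ < L.symm ⟨k + 1, h⟩ then L
    else L.trans (Equiv.swap ⟨k, Nat.lt_of_succ_lt h⟩ ⟨k + 1, h⟩)
  else L

/-- An element `x` is `L`-golden if every element strictly above it has a larger label. -/
def IsGolden (L : Labeling P) (x : P) : Prop := ∀ y : P, x < y → L x < L y

/-- The largest label `n` of an `n`-element poset, as an element of `Fin n`. -/
def topFin (P : Type*) [Fintype P] [Nonempty P] : Fin (Fintype.card P) :=
  ⟨Fintype.card P - 1, Nat.sub_lt Fintype.card_pos Nat.one_pos⟩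


-- ===== auxiliary lemmas =====

/-- The relation holding between consecutive elements of a promotion chain. -/
def chainRel (L : Labeling P) (a b : P) : Prop :=
  a < b ∧ ∀ z : P, a < z → L b ≤ L z

lemma promChainFrom_eq_cons (L : Labeling P) (v : P) :
    ∃ t, promChainFrom L v = v :: t := by
  rw [promChainFrom]
  split
  · exact ⟨_, rfl⟩
  · exact ⟨[], rfl⟩

lemma promChainFrom_ne_nil (L : Labeling P) (v : P) : promChainFrom L v ≠ [] := by
  obtain ⟨t, ht⟩ := promChainFrom_eq_cons L v
  simp [ht]

lemma lSucc_card_lt (L : Labeling P) (v : P)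
    (h : (Finset.univ.filter fun y => v < y).Nonempty) :
    (Finset.univ.filter fun y => lSucc L v h < y).card <
      (Finset.univ.filter fun y => v < y).card := by
  apply Finset.card_lt_card
  refine (Finset.ssubset_iff_of_subset ?_).mpr ?_
  · intro z hz
    simp only [Finset.mem_filter, Finset.mem_univ, true_and] at *
    exact lt_trans (lt_lSucc L v h) hz
  · exact ⟨lSucc L v h, by simp [lt_lSucc L v h], by simp⟩

lemma lSucc_min (L : Labeling P) (v : P)
    (h : (Finset.univ.filter fun y => v < y).Nonempty) :
    ∀ z : P, v < z → L (lSucc L v h) ≤ L z := by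
  intro z hz
  have heq : L (lSucc L v h) =
      ((Finset.univ.filter fun y => v < y).image L).min' (h.image _) := by
    unfold lSucc
    rw [Equiv.apply_symm_apply]
  rw [heq]
  exact Finset.min'_le _ _ (Finset.mem_image_of_mem L (by simp [hz]))

lemma promChainFrom_chain' (L : Labeling P) (v : P) :
    List.Chain' (chainRel L) (promChainFrom L v) := by
  have key : ∀ N (v : P), (Finset.univ.filter fun y => v < y).card < N →
      List.Chain' (chainRel L) (promChainFrom L v) := by
    intro N
    induction N with
    | zero => exact fun v h => absurd h (Nat.not_lt_zero _)
    | succ N ih =>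
      intro v hv
      rw [promChainFrom]
      split
      next h =>
        obtain ⟨t, ht⟩ := promChainFrom_eq_cons L (lSucc L v h)
        unfold List.Chain'
        rw [ht, List.isChain_cons_cons]
        constructor
        · exact ⟨lt_lSucc L v h, lSucc_min L v h⟩
        · rw [← ht]
          exact ih _ (by have := lSucc_card_lt L v h; omega)
      next h => simp [List.Chain']
  exact key _ v (Nat.lt_succ_self _)

lemma promChainFrom_getLast_max (L : Labeling P) (v : P) :
    ∀ z : P, ¬ ((promChainFrom L v).getLast (promChainFrom_ne_nil L v) < z) := by
  have key : ∀ N (v : P), (Finset.univ.filter fun y => v < y).card < N →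
      ∀ z : P, ¬ ((promChainFrom L v).getLast (promChainFrom_ne_nil L v) < z) := by
    intro N
    induction N with
    | zero => exact fun v h => absurd h (Nat.not_lt_zero _)
    | succ N ih =>
      intro v hv z hz
      by_cases h : (Finset.univ.filter fun y => v < y).Nonempty
      · have hrw : promChainFrom L v = v :: promChainFrom L (lSucc L v h) := by
          rw [promChainFrom, dif_pos h]
        have hlast : (promChainFrom L v).getLast (promChainFrom_ne_nil L v)
            = (promChainFrom L (lSucc L v h)).getLast (promChainFrom_ne_nil L _) := by
          have e : ∀ (l : List P) (hl : l ≠ []),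
              l = v :: promChainFrom L (lSucc L v h) →
              l.getLast hl
                = (promChainFrom L (lSucc L v h)).getLast (promChainFrom_ne_nil L _) := by
            rintro l hl rfl
            exact List.getLast_cons (promChainFrom_ne_nil L _)
          exact e _ _ hrw
        rw [hlast] at hz
        exact ih _ (by have := lSucc_card_lt L v h; omega) z hz
      · have hrw : promChainFrom L v = [v] := by
          rw [promChainFrom, dif_neg h]
        have e : ∀ (l : List P) (hl : l ≠ []), l = [v] → l.getLast hl = v := by
          rintro l hl rfl
          rfl
        rw [e _ _ hrw] at hz
        exact h ⟨z, by simp [hz]⟩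
  exact key _ v (Nat.lt_succ_self _)

lemma finRotate_symm_val {n : ℕ} (k : Fin (n + 1)) :
    (((finRotate (n + 1)).symm k : Fin (n + 1)) : ℕ)
      = if (k : ℕ) = 0 then n else (k : ℕ) - 1 := by
  set y := (finRotate (n + 1)).symm k with hy
  have hk : k = y + 1 := by
    rw [hy, ← finRotate_succ_apply, Equiv.apply_symm_apply]
  have hval : (k : ℕ) = if y = Fin.last n then 0 else (y : ℕ) + 1 := by
    rw [hk]; exact Fin.val_add_one y
  by_cases h : y = Fin.last n
  · have hk0 : (k : ℕ) = 0 := by rw [hval, if_pos h]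
    rw [if_pos hk0, h]
    rfl
  · have hk1 : (k : ℕ) = (y : ℕ) + 1 := by rw [hval, if_neg h]
    rw [hk1, if_neg (Nat.succ_ne_zero _)]
    omega

lemma finRotate_symm_val' {m : ℕ} (hm : 0 < m) (k : Fin m) :
    (((finRotate m).symm k : Fin m) : ℕ)
      = if (k : ℕ) = 0 then m - 1 else (k : ℕ) - 1 := by
  obtain ⟨n, rfl⟩ : ∃ n, m = n + 1 := ⟨m - 1, by omega⟩
  simpa using finRotate_symm_val k

/-- The key one-step lemma: if the set of elements with `L`-label `≥ j+1`
(0-indexed) is an upper set, then the set of elements with `∂L`-label `≥ j`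
is an upper set. -/
lemma promote_upperSet_step (L : Labeling P) (j : ℕ)
    (hj : IsUpperSet {x : P | j + 1 ≤ (L x : ℕ)}) :
    IsUpperSet {x : P | j ≤ ((promote L) x : ℕ)} := by
  by_cases hP : Nonempty P
  swap
  · intro a b _ _
    exact absurd (Nonempty.intro a) hP
  have hn : 0 < Fintype.card P := Fintype.card_pos
  set v1 : P := L.symm ⟨0, hn⟩ with hv1
  set ch : List P := promChainFrom L v1 with hch
  set σ : Equiv.Perm P := List.formPerm ch with hσ
  have hNE : ch ≠ [] := promChainFrom_ne_nil L v1
  obtain ⟨t, htc'⟩ := promChainFrom_eq_cons L v1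
  have htc : ch = v1 :: t := hch.trans htc'
  have hchain : List.Chain' (chainRel L) ch := promChainFrom_chain' L v1
  have hlt : List.Chain' (· < ·) ch := List.IsChain.imp (fun a b hab => hab.1) hchain
  have hnodup : ch.Nodup :=
    List.Pairwise.imp ne_of_lt ((List.isChain_iff_pairwise).mp hlt)
  have hlen : 0 < ch.length := List.length_pos_iff.mpr hNE
  have hstep : ∀ i (h : i + 1 < ch.length), chainRel L ch[i] ch[i + 1] := by
    intro i h
    have := List.isChain_iff_getElem.mp hchain i (by omega)
    simpa [List.get_eq_getElem] using this
  have hmono : ∀ i (h : i + 1 < ch.length), L ch[i] ≤ L ch[i + 1] := by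
    intro i h
    match i with
    | 0 =>
      have h0 : ch[0]'(by omega) = v1 := by simp [hch, htc']
      have hL0 : L (ch[0]'(by omega)) = ⟨0, hn⟩ := by
        rw [h0, hv1, Equiv.apply_symm_apply]
      rw [hL0, Fin.le_def]
      exact Nat.zero_le _
    | i + 1 =>
      exact (hstep i (by omega)).2 _
        (lt_trans (hstep i (by omega)).1 (hstep (i + 1) h).1)
  have hprom : ∀ x : P, promote L x = (finRotate (Fintype.card P)).symm (L (σ x)) := by
    intro x
    rw [promote, dif_pos hP]
    rfl
  have hlastmax : ∀ z : P, ¬ (ch.getLast hNE < z) := promChainFrom_getLast_max L v1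
  have hσlast : σ (ch.getLast hNE) = v1 := by
    have e : ∀ (l : List P) (hl : l ≠ []), l = v1 :: t → σ (l.getLast hl) = v1 := by
      rintro l hl rfl
      rw [hσ, htc]
      exact List.formPerm_apply_getLast v1 t
    exact e ch hNE htc
  have hval : ∀ x : P, ((promote L) x : ℕ)
      = if (L (σ x) : ℕ) = 0 then Fintype.card P - 1 else (L (σ x) : ℕ) - 1 := by
    intro x
    rw [hprom x]
    exact finRotate_symm_val' hn (L (σ x))
  have hzero : ∀ x : P, (L (σ x) : ℕ) = 0 ↔ x = ch.getLast hNE := by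
    intro x
    constructor
    · intro h0
      have hfin : L (σ x) = ⟨0, hn⟩ := Fin.ext h0
      have hx : σ x = v1 := by
        rw [hv1, ← hfin, Equiv.symm_apply_apply]
      exact σ.injective (hx.trans hσlast.symm)
    · intro h
      rw [h, hσlast, hv1, Equiv.apply_symm_apply]
  intro x z hxz hx
  simp only [Set.mem_setOf_eq] at hx ⊢
  rcases eq_or_lt_of_le hxz with rfl | hxz
  · exact hx
  by_cases hxl : x = ch.getLast hNE
  · exact absurd (hxl ▸ hxz) (hlastmax z)
  rw [hval x, if_neg (fun h0 => hxl ((hzero x).mp h0))] at hx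
  have hx' : j + 1 ≤ (L (σ x) : ℕ) := by
    have hne0 : (L (σ x) : ℕ) ≠ 0 := fun h0 => hxl ((hzero x).mp h0)
    omega
  have hz : j + 1 ≤ (L z : ℕ) := by
    by_cases hxc : x ∈ ch
    · obtain ⟨i, hi, hix⟩ := List.mem_iff_getElem.mp hxc
      have hine : i + 1 < ch.length := by
        rcases Nat.lt_or_ge (i + 1) ch.length with h | h
        · exact h
        · exfalso
          apply hxl
          rw [← hix, List.getLast_eq_getElem]
          congr 1
          omega
      have hσx : σ x = ch[i + 1] := by
        rw [← hix, hσ]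
        exact List.formPerm_apply_lt_getElem ch hnodup i hine
      have hle := (hstep i hine).2 z (hix ▸ hxz)
      rw [hσx] at hx'
      exact le_trans hx' hle
    · have hσx : σ x = x := List.formPerm_apply_of_notMem hxc
      rw [hσx] at hx'
      exact hj (le_of_lt hxz) hx'
  rw [hval z]
  by_cases hzl : z = ch.getLast hNE
  · rw [if_pos ((hzero z).mpr hzl)]
    have hlt' : (L z : ℕ) < Fintype.card P := (L z).isLt
    omega
  · rw [if_neg (fun h0 => hzl ((hzero z).mp h0))]
    have hz' : j + 1 ≤ (L (σ z) : ℕ) := by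
      by_cases hzc : z ∈ ch
      · obtain ⟨i, hi, hiz⟩ := List.mem_iff_getElem.mp hzc
        have hine : i + 1 < ch.length := by
          rcases Nat.lt_or_ge (i + 1) ch.length with h | h
          · exact h
          · exfalso
            apply hzl
            rw [← hiz, List.getLast_eq_getElem]
            congr 1
            omega
        have hσz : σ z = ch[i + 1] := by
          rw [← hiz, hσ]
          exact List.formPerm_apply_lt_getElem ch hnodup i hine
        rw [hσz]
        have hm := hmono i hine
        rw [hiz] at hm
        exact le_trans hz hm
      · rw [List.formPerm_apply_of_notMem hzc]
        exact hz
    omega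

/-- After `γ` promotions, the set of elements with 0-indexed label `≥ j`, for
`j ≥ n − γ`, is an upper set. -/
lemma promote_iterate_upperSet (L : Labeling P) (γ : ℕ) :
    ∀ j : ℕ, Fintype.card P - γ ≤ j →
      IsUpperSet {x : P | j ≤ ((promote^[γ] L) x : ℕ)} := by
  induction γ with
  | zero =>
    intro j hjn a b _ ha
    simp only [Function.iterate_zero_apply, Set.mem_setOf_eq] at ha ⊢
    exact absurd ha (by have := (L a).isLt; omega)
  | succ γ ih =>
    intro j hjn
    have hrw : promote^[γ + 1] L = promote (promote^[γ] L) :=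
      Function.iterate_succ_apply' promote γ L
    rw [hrw]
    exact promote_upperSet_step (promote^[γ] L) j (ih (j + 1) (by omega))

/-- For every `0 ≤ γ ≤ n`, the elements
`L_γ⁻¹(n−γ+1), …, L_γ⁻¹(n)` (i.e. `(∂^γ L)⁻¹ j` for `Fin`-labels `j ≥ n − γ`)
are frozen with respect to `L_γ = ∂^γ(L)`. -/
theorem top_labels_frozen (L : Labeling P) (γ : ℕ) (hγ : γ ≤ Fintype.card P)
    (j : Fin (Fintype.card P)) (hj : Fintype.card P - γ ≤ (j : ℕ)) :
    IsFrozen (promote^[γ] L) ((promote^[γ] L).symm j) := by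
  set Lg : Labeling P := promote^[γ] L with hLg
  have hγle : γ ≤ frozenA Lg := by
    rw [frozenA]
    refine le_csSup ⟨Fintype.card P, fun a ha => ha.1⟩ ⟨hγ, ?_⟩
    intro j' h1 h2
    have hups := promote_iterate_upperSet L γ (j' - 1) (by omega)
    intro a b hab ha
    obtain ⟨ha1, -⟩ := ha
    have ha1' : j' - 1 ≤ (Lg a : ℕ) := by
      unfold labelOf at ha1
      omega
    have hb : j' - 1 ≤ (Lg b : ℕ) := hups hab ha1'
    have hblt : (Lg b : ℕ) < Fintype.card P := (Lg b).isLt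
    exact ⟨by unfold labelOf; omega, by unfold labelOf; omega⟩
  rw [IsFrozen, labelOf, Equiv.apply_symm_apply]
  omega

end
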